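/- Let (L, w) be a valued field and {a_ρ}_{ρ<λ} a pseudo-convergent sequence in L for w. Then for every polynomial f ∈ L[x] there exists ρ_f < λ such that either w(f(a_σ)) = w(f(a_{ρ_f})) for every ρ_f ≤ σ < λ, or w(f(a_σ)) > w(f(a_ρ)) for every ρ_f ≤ ρ < σ < λ. -/

import Mathlib

open Polynomial

section KeyPolyDefs

variable {K : Type*} [Field K] {Γ : Type*} [AddCommGroup Γ] [LinearOrder Γ] [IsOrderedAddMonoid Γ]

/-- The value `ν f` read in `Γ` (junk value `0` when `ν f = ⊤`). -/
noncomputable def aval (ν : AddValuation (Polynomial K) (WithTop Γ)) (f : Polynomial K) : Γ :=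
  WithTop.untopD 0 (ν f)

/-- `ν` has trivial support: only `0` has value `⊤`. -/
def TrivialSupport (ν : AddValuation (Polynomial K) (WithTop Γ)) : Prop :=
  ∀ f : Polynomial K, ν f = ⊤ → f = 0

/-- The set of indices `r`, `1 ≤ r ≤ deg f` with `∂_r f ≠ 0`, over which `ε(f)` is computed. -/
noncomputable def epsSupport (f : Polynomial K) : Finset ℕ :=
  @Finset.filter _ (fun r => f.hasseDeriv r ≠ 0) (Classical.decPred _) (Finset.Icc 1 f.natDegree)

/-- `ε(f) = max_{r ≥ 1} (ν f - ν ∂_r f) / r`, computed in the divisible group `Γ`. -/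
noncomputable def eps [Module ℚ Γ] (ν : AddValuation (Polynomial K) (WithTop Γ))
    (f : Polynomial K) : Γ :=
  if h : (epsSupport f).Nonempty then
    (epsSupport f).sup' h fun r => ((r : ℚ)⁻¹) • (aval ν f - aval ν (f.hasseDeriv r))
  else 0

/-- `Q` is a key polynomial for `ν`: `Q` is monic and every `f` with `ε(f) ≥ ε(Q)` satisfies
`deg f ≥ deg Q`. -/
def IsKeyPoly [Module ℚ Γ] (ν : AddValuation (Polynomial K) (WithTop Γ))
    (Q : Polynomial K) : Prop :=
  Q.Monic ∧ 0 < Q.natDegree ∧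
    ∀ f : Polynomial K, 0 < f.natDegree → eps ν Q ≤ eps ν f → Q.natDegree ≤ f.natDegree

/-- The `i`-th coefficient of the `q`-expansion of a polynomial. -/
noncomputable def qCoeff (q : Polynomial K) : ℕ → Polynomial K → Polynomial K
  | 0, p => p % q
  | n + 1, p => qCoeff q n (p / q)

/-- The `q`-truncation `ν_q` of `ν`:  `ν_q(p) = min_i ν(p_i q^i)` where `p = Σ p_i q^i`
is the `q`-expansion of `p`. -/
noncomputable def trunc (ν : AddValuation (Polynomial K) (WithTop Γ)) (q p : Polynomial K) :
    WithTop Γ :=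
  (Finset.range (p.natDegree + 1)).inf fun i => ν (qCoeff q i p * q ^ i)

variable {L : Type*} [Field L] [Algebra K L]

/-- `δ(f)`: the maximal value `μ(x - a)` over the roots `a` of `f` in `L`
(junk value `0` if `f` has no roots in `L`). -/
noncomputable def delta (μ : AddValuation (Polynomial L) (WithTop Γ)) (f : Polynomial K) : Γ :=
  letI := Classical.decEq L
  if h : ((f.map (algebraMap K L)).roots.toFinset).Nonempty then
    ((f.map (algebraMap K L)).roots.toFinset).sup' h fun a => aval μ (X - C a)
  else 0

/-- `μ` on `L[x]` extends `ν` on `K[x]`. -/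
def IsExtension (μ : AddValuation (Polynomial L) (WithTop Γ))
    (ν : AddValuation (Polynomial K) (WithTop Γ)) : Prop :=
  ∀ f : Polynomial K, μ (f.map (algebraMap K L)) = ν f

/-- `w` on `K(x)` extends `ν` on `K[x]`. -/
def ExtendsToRatFunc (w : AddValuation (RatFunc K) (WithTop Γ))
    (ν : AddValuation (Polynomial K) (WithTop Γ)) : Prop :=
  ∀ p : Polynomial K, w (algebraMap (Polynomial K) (RatFunc K) p) = ν p

/-- The residue of `f` is transcendental over the residue field `Kν`:  every polynomial with
coefficients in the valuation ring of `K`, at least one of which is a unit, keeps value `0`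
when evaluated at `f`. -/
def ResidueTranscendentalElem (w : AddValuation (RatFunc K) (WithTop Γ)) (f : RatFunc K) : Prop :=
  ∀ (n : ℕ) (c : ℕ → K),
    (∀ i ≤ n, 0 ≤ w (algebraMap K (RatFunc K) (c i))) →
    (∃ i ≤ n, w (algebraMap K (RatFunc K) (c i)) = 0) →
    w (∑ i ∈ Finset.range (n + 1), algebraMap K (RatFunc K) (c i) * f ^ i) = 0

/-- The residue of `g` is algebraic over the residue field `Kν`: some polynomial with
coefficients in the valuation ring of `K`, at least one of which is a unit, gets positive
value when evaluated at `g`. -/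
def ResidueAlgebraicElem (w : AddValuation (RatFunc K) (WithTop Γ)) (g : RatFunc K) : Prop :=
  ∃ (n : ℕ) (c : ℕ → K),
    (∀ i ≤ n, 0 ≤ w (algebraMap K (RatFunc K) (c i))) ∧
    (∃ i ≤ n, w (algebraMap K (RatFunc K) (c i)) = 0) ∧
    0 < w (∑ i ∈ Finset.range (n + 1), algebraMap K (RatFunc K) (c i) * g ^ i)

/-- `w` is residue-transcendental: some `f` with `w f = 0` has transcendental residue. -/
def IsResidueTranscendental (w : AddValuation (RatFunc K) (WithTop Γ)) : Prop :=
  ∃ f : RatFunc K, w f = 0 ∧ ResidueTranscendentalElem w f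

/-- `w` is value-transcendental: some value `w f` is torsion-free over the value group
`νK` of `K`, i.e. `n ν(f) ∉ νK` for every `n ≥ 1`. -/
def IsValueTranscendental (w : AddValuation (RatFunc K) (WithTop Γ)) : Prop :=
  ∃ f : RatFunc K, f ≠ 0 ∧
    ∀ n : ℕ, 0 < n → ∀ c : K, c ≠ 0 → w (f ^ n) ≠ w (algebraMap K (RatFunc K) c)

/-- `w` is valuation-transcendental: it is value-transcendental or residue-transcendental. -/
def IsValuationTranscendental (w : AddValuation (RatFunc K) (WithTop Γ)) : Prop :=
  IsValueTranscendental w ∨ IsResidueTranscendental w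

end KeyPolyDefs

section MinimalPairDefs

variable {Γ : Type*} [AddCommGroup Γ] [LinearOrder Γ] [IsOrderedAddMonoid Γ] {L : Type*} [Field L]

/-- `(a, d)` is a minimal pair for the valuation (w.r.t. the extension `μ` to `L[x]`):
every `b` with `μ(b - a) ≥ d` satisfies `[K(b) : K] ≥ [K(a) : K]`. -/
def IsMinimalPair (K : Type*) [Field K] [Algebra K L]
    (μ : AddValuation (Polynomial L) (WithTop Γ)) (a : L) (d : Γ) : Prop :=
  ∀ b : L, (d : WithTop Γ) ≤ μ (C (b - a)) →
    (minpoly K a).natDegree ≤ (minpoly K b).natDegree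

/-- `(a, d)` is a minimal pair of definition: a minimal pair with `μ(x - a) = d ≥ μ(x - b)`
for every `b ∈ L`. -/
def IsMinimalPairOfDefinition (K : Type*) [Field K] [Algebra K L]
    (μ : AddValuation (Polynomial L) (WithTop Γ)) (a : L) (d : Γ) : Prop :=
  IsMinimalPair K μ a d ∧ μ (X - C a) = (d : WithTop Γ) ∧
    ∀ b : L, μ (X - C b) ≤ (d : WithTop Γ)

end MinimalPairDefs


section PCVAux

variable {M : Type*} [Field M] {Γ₀ : Type*} [LinearOrderedCommGroupWithZero Γ₀]
  {ι : Type*} [LinearOrder ι] [Nonempty ι] [NoMaxOrder ι]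

variable (v : Valuation M Γ₀) (b : ι → M)

/-- The common value of `v (b σ - b ρ)` for `σ > ρ`, for a pseudo-convergent sequence. -/
noncomputable def pcvGamma (ρ : ι) : Γ₀ := v (b (Classical.choose (exists_gt ρ)) - b ρ)

variable {v b}

lemma pcv_diff_key (hpc : ∀ ρ σ τ : ι, ρ < σ → σ < τ → v (b τ - b σ) < v (b σ - b ρ))
    {ρ s s' : ι} (h1 : ρ < s) (h2 : s < s') : v (b s' - b ρ) = v (b s - b ρ) := by
  have hd : b s' - b ρ = (b s' - b s) + (b s - b ρ) := by ring
  rw [hd, Valuation.map_add_eq_of_lt_right _ (hpc ρ s s' h1 h2)]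

lemma pcv_gamma_eq (hpc : ∀ ρ σ τ : ι, ρ < σ → σ < τ → v (b τ - b σ) < v (b σ - b ρ))
    {ρ σ : ι} (h : ρ < σ) : v (b σ - b ρ) = pcvGamma v b ρ := by
  have hc := Classical.choose_spec (exists_gt ρ)
  rcases lt_trichotomy σ (Classical.choose (exists_gt ρ)) with h' | h' | h'
  · exact (pcv_diff_key hpc h h').symm
  · rw [h']; rfl
  · exact pcv_diff_key hpc hc h'

lemma pcv_gamma_lt (hpc : ∀ ρ σ τ : ι, ρ < σ → σ < τ → v (b τ - b σ) < v (b σ - b ρ))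
    {ρ σ : ι} (h : ρ < σ) : pcvGamma v b σ < pcvGamma v b ρ := by
  obtain ⟨τ, hτ⟩ := exists_gt σ
  rw [← pcv_gamma_eq hpc hτ, ← pcv_gamma_eq hpc h]
  exact hpc ρ σ τ h hτ

lemma pcv_gamma_ne_zero (hpc : ∀ ρ σ τ : ι, ρ < σ → σ < τ → v (b τ - b σ) < v (b σ - b ρ))
    (ρ : ι) : pcvGamma v b ρ ≠ 0 := by
  obtain ⟨σ, hσ⟩ := exists_gt ρ
  intro h0
  exact not_lt_of_ge zero_le' (h0 ▸ pcv_gamma_lt hpc hσ)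

/-- Dichotomy for a single linear factor: `v (b ρ - c)` is either eventually constant
(and nonzero), or equal to `γ ρ` for every `ρ`. -/
lemma pcv_elem_dichotomy (hpc : ∀ ρ σ τ : ι, ρ < σ → σ < τ → v (b τ - b σ) < v (b σ - b ρ))
    (c : M) :
    (∃ ρ₀ : ι, v (b ρ₀ - c) ≠ 0 ∧ ∀ σ, ρ₀ ≤ σ → v (b σ - c) = v (b ρ₀ - c)) ∨
    (∀ ρ : ι, v (b ρ - c) = pcvGamma v b ρ) := by
  by_cases h : ∃ ρ₀ : ι, pcvGamma v b ρ₀ < v (b ρ₀ - c)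
  · obtain ⟨ρ₀, hρ₀⟩ := h
    refine Or.inl ⟨ρ₀, ?_, ?_⟩
    · exact fun h0 => not_lt_of_ge zero_le' (h0 ▸ hρ₀)
    · intro σ hσ
      rcases eq_or_lt_of_le hσ with rfl | hσ
      · rfl
      · have hd : b σ - c = (b σ - b ρ₀) + (b ρ₀ - c) := by ring
        rw [hd, Valuation.map_add_eq_of_lt_right _ ((pcv_gamma_eq hpc hσ).symm ▸ hρ₀)]
  · push_neg at h
    refine Or.inr fun ρ => ?_
    rcases lt_or_eq_of_le (h ρ) with hlt | heq
    · exfalso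
      obtain ⟨σ, hσ⟩ := exists_gt ρ
      have hd : b σ - c = (b σ - b ρ) + (b ρ - c) := by ring
      have h1 : v (b σ - c) = pcvGamma v b ρ := by
        rw [hd, Valuation.map_add_eq_of_lt_left _ ((pcv_gamma_eq hpc hσ).symm ▸
          (pcv_gamma_eq hpc hσ) ▸ hlt)]
        exact pcv_gamma_eq hpc hσ
      have h2 := h σ
      rw [h1] at h2
      exact not_lt_of_ge h2 (pcv_gamma_lt hpc hσ)
    · exact heq
  
lemma pcv_prod_dichotomy (hpc : ∀ ρ σ τ : ι, ρ < σ → σ < τ → v (b τ - b σ) < v (b σ - b ρ))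
    (R : Multiset M) :
    ∃ ρ₀ : ι, (∀ ρ, ρ₀ ≤ ρ → (R.map fun r => v (b ρ - r)).prod ≠ 0) ∧
      ((∀ σ, ρ₀ ≤ σ → (R.map fun r => v (b σ - r)).prod = (R.map fun r => v (b ρ₀ - r)).prod) ∨
       (∀ ρ σ, ρ₀ ≤ ρ → ρ < σ →
          (R.map fun r => v (b σ - r)).prod < (R.map fun r => v (b ρ - r)).prod)) := by
  induction R using Multiset.induction_on with
  | empty =>
      exact ⟨Classical.arbitrary ι, fun _ _ => by simp, Or.inl fun _ _ => by simp⟩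
  | cons c R ih =>
      obtain ⟨ρ₁, hne, hbr⟩ := ih
      rcases pcv_elem_dichotomy hpc c with ⟨ρ₂, hc0, hcon⟩ | hγ
      · refine ⟨max ρ₁ ρ₂, ?_, ?_⟩
        · intro ρ hρ
          simp only [Multiset.map_cons, Multiset.prod_cons]
          exact mul_ne_zero (by rw [hcon ρ ((le_max_right _ _).trans hρ)]; exact hc0)
            (hne ρ ((le_max_left _ _).trans hρ))
        · rcases hbr with hcon' | hinc
          · refine Or.inl fun σ hσ => ?_
            simp only [Multiset.map_cons, Multiset.prod_cons]
            rw [hcon σ ((le_max_right _ _).trans hσ), hcon _ (le_max_right _ _),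
              hcon' σ ((le_max_left _ _).trans hσ), hcon' _ (le_max_left _ _)]
          · refine Or.inr fun ρ σ hρ hσ => ?_
            simp only [Multiset.map_cons, Multiset.prod_cons]
            rw [hcon σ ((le_max_right _ _).trans (hρ.trans hσ.le)),
              hcon ρ ((le_max_right _ _).trans hρ)]
            exact mul_lt_mul_of_le_of_lt_of_nonneg_of_pos le_rfl
              (hinc ρ σ ((le_max_left _ _).trans hρ) hσ) zero_le' (zero_lt_iff.mpr hc0)
      · refine ⟨ρ₁, ?_, Or.inr ?_⟩
        · intro ρ hρ
          simp only [Multiset.map_cons, Multiset.prod_cons]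
          exact mul_ne_zero (by rw [hγ ρ]; exact pcv_gamma_ne_zero hpc ρ) (hne ρ hρ)
        · intro ρ σ hρ hσ
          simp only [Multiset.map_cons, Multiset.prod_cons]
          rw [hγ σ, hγ ρ]
          rcases hbr with hcon' | hinc
          · rw [hcon' σ (hρ.trans hσ.le), hcon' ρ hρ]
            rw [mul_comm, mul_comm (pcvGamma v b ρ)]
            exact mul_lt_mul_of_le_of_lt_of_nonneg_of_pos le_rfl (pcv_gamma_lt hpc hσ) zero_le' (zero_lt_iff.mpr (hne ρ₁ le_rfl))
          · exact mul_lt_mul_of_le_of_lt_of_nonneg_of_pos (pcv_gamma_lt hpc hσ).le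
              (hinc ρ σ hρ hσ) zero_le' (zero_lt_iff.mpr (pcv_gamma_ne_zero hpc ρ))

/-- The multiplicative version of the main theorem, over an algebraically closed field. -/
lemma pcv_main_mult [IsAlgClosed M]
    (hpc : ∀ ρ σ τ : ι, ρ < σ → σ < τ → v (b τ - b σ) < v (b σ - b ρ))
    (g : Polynomial M) :
    ∃ ρf : ι, (∀ σ, ρf ≤ σ → v (g.eval (b σ)) = v (g.eval (b ρf))) ∨
      (∀ ρ σ, ρf ≤ ρ → ρ < σ → v (g.eval (b σ)) < v (g.eval (b ρ))) := by
  by_cases hg : g = 0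
  · exact ⟨Classical.arbitrary ι, Or.inl fun _ _ => by simp [hg]⟩
  · have hsplit : g.Splits := IsAlgClosed.splits g
    have hfac := hsplit.eq_prod_roots
    have hval : ∀ x : M,
        v (g.eval x) = v g.leadingCoeff * ((g.roots.map fun r => v (x - r)).prod) := by
      intro x
      conv_lhs => rw [hfac]
      rw [eval_mul, eval_C, Polynomial.eval_multiset_prod, map_mul, map_multiset_prod]
      simp [Multiset.map_map, Function.comp_def]
    obtain ⟨ρ₀, hne, hbr⟩ := pcv_prod_dichotomy hpc g.roots
    have hlc : v g.leadingCoeff ≠ 0 :=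
      fun h => (Polynomial.leadingCoeff_ne_zero.mpr hg) (v.zero_iff.mp h)
    refine ⟨ρ₀, ?_⟩
    rcases hbr with hcon | hinc
    · exact Or.inl fun σ hσ => by rw [hval, hval, hcon σ hσ]
    · refine Or.inr fun ρ σ hρ hσ => ?_
      rw [hval, hval]
      exact mul_lt_mul_of_le_of_lt_of_nonneg_of_pos le_rfl (hinc ρ σ hρ hσ) zero_le' (zero_lt_iff.mpr hlc)

end PCVAux

section TransferAux

variable {L : Type*} [Field L] {Γ : Type*} [AddCommGroup Γ] [LinearOrder Γ] [IsOrderedAddMonoid Γ]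

/-- The valuation subring of an additive valuation on a field. -/
def addValSubring (w : AddValuation L (WithTop Γ)) : ValuationSubring L where
  carrier := {x | 0 ≤ w x}
  mul_mem' {x y} hx hy := by
    have := add_nonneg (α := WithTop Γ) hx hy
    simpa [w.map_mul] using this
  one_mem' := by simp [Set.mem_setOf_eq, w.map_one]
  add_mem' {x y} hx hy := le_trans (le_min hx hy) (w.map_add x y)
  zero_mem' := by simp [Set.mem_setOf_eq, w.map_zero]
  neg_mem' {x} hx := by simpa [Set.mem_setOf_eq, w.map_neg] using hx
  mem_or_inv_mem' x := by
    by_cases h : 0 ≤ w x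
    · exact Or.inl h
    · refine Or.inr ?_
      have hlt : w x < 0 := not_le.mp h
      have hne : w x ≠ ⊤ := hlt.ne_top
      obtain ⟨g, hg⟩ := WithTop.ne_top_iff_exists.mp hne
      have hginv : w x⁻¹ = ((-g : Γ) : WithTop Γ) := by
        rw [w.map_inv, ← hg, ← WithTop.LinearOrderedAddCommGroup.coe_neg]
      show 0 ≤ w x⁻¹
      rw [hginv, ← WithTop.coe_zero, WithTop.coe_le_coe]
      have : (g : WithTop Γ) < ((0 : Γ) : WithTop Γ) := by
        rw [hg, WithTop.coe_zero]; exact hlt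
      have hg0 : g < 0 := WithTop.coe_lt_coe.mp this
      exact neg_nonneg.mpr hg0.le

lemma mem_addValSubring {w : AddValuation L (WithTop Γ)} {x : L} :
    x ∈ addValSubring w ↔ 0 ≤ w x := Iff.rfl

end TransferAux

/-- Let `(L, w)` be a valued field and `{a_ρ}_{ρ<λ}` a pseudo-convergent
sequence in `L`. For every polynomial `f ∈ L[x]` there exists `ρ_f < λ` such that either
`w(f(a_σ)) = w(f(a_{ρ_f}))` for all `σ ≥ ρ_f`, or `w(f(a_σ)) > w(f(a_ρ))` for all
`ρ_f ≤ ρ < σ`. -/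
theorem pseudoConvergent_fixes_or_increases {L : Type*} [Field L] {Γ : Type*}
    [AddCommGroup Γ] [LinearOrder Γ] [IsOrderedAddMonoid Γ]
    {ι : Type*} [LinearOrder ι] [WellFoundedLT ι] [Nonempty ι] [NoMaxOrder ι]
    (w : AddValuation L (WithTop Γ)) (a : ι → L)
    (hpc : ∀ ρ σ τ : ι, ρ < σ → σ < τ → w (a σ - a ρ) < w (a τ - a σ))
    (f : Polynomial L) :
    ∃ ρf : ι,
      (∀ σ : ι, ρf ≤ σ → w (f.eval (a σ)) = w (f.eval (a ρf))) ∨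
      (∀ ρ σ : ι, ρf ≤ ρ → ρ < σ → w (f.eval (a ρ)) < w (f.eval (a σ))) := by
  classical
  let M := AlgebraicClosure L
  let e : L →+* M := algebraMap L M
  let O : ValuationSubring L := addValSubring w
  obtain ⟨A, hA, hloc⟩ := IsLocalRing.exists_factor_valuationRing (e.comp O.subtype)
  set vv := A.valuation with hvv
  -- transfer of integrality
  have hS : ∀ z : L, 0 ≤ w z ↔ vv (e z) ≤ 1 := by
    intro z
    constructor
    · intro hz
      exact (A.valuation_le_one_iff (e z)).mpr ((A.mem_toSubring _).mp (hA ⟨z, hz⟩))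
    · intro h1
      by_contra hneg
      have hlt : w z < 0 := not_le.mp hneg
      have hz0 : z ≠ 0 := by
        intro h0
        rw [h0, w.map_zero] at hlt
        exact not_top_lt hlt
      have hzinv : (0 : WithTop Γ) ≤ w z⁻¹ := by
        have hne : w z ≠ ⊤ := hlt.ne_top
        obtain ⟨g, hg⟩ := WithTop.ne_top_iff_exists.mp hne
        rw [w.map_inv, ← hg, ← WithTop.LinearOrderedAddCommGroup.coe_neg, ← WithTop.coe_zero, WithTop.coe_le_coe]
        have hg0 : g < 0 := WithTop.coe_lt_coe.mp (by rw [hg, WithTop.coe_zero]; exact hlt)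
        exact neg_nonneg.mpr hg0.le
      set u : O := ⟨z⁻¹, hzinv⟩ with hu
      have hunit : IsUnit ((e.comp O.subtype).codRestrict A.toSubring hA u) := by
        refine isUnit_iff_exists_inv.mpr
          ⟨⟨e z, (A.mem_toSubring _).mpr ((A.valuation_le_one_iff (e z)).mp h1)⟩, ?_⟩
        ext
        show e z⁻¹ * e z = 1
        rw [← map_mul, inv_mul_cancel₀ hz0, map_one]
      obtain ⟨u', hu'⟩ := isUnit_iff_exists_inv.mp (hloc.map_nonunit u hunit)
      have huL : (z⁻¹ : L) * (u' : L) = 1 := by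
        have h5 := congrArg Subtype.val hu'
        simpa [hu] using h5
      have hzz : z = (u' : L) := (inv_mul_eq_one₀ hz0).mp huL
      exact hneg (hzz ▸ u'.2)
  -- transfer of the order
  have hT : ∀ x y : L, w x ≤ w y ↔ vv (e y) ≤ vv (e x) := by
    intro x y
    by_cases hx : x = 0
    · subst hx
      have l1 : (w 0 ≤ w y) ↔ y = 0 := by rw [w.map_zero, top_le_iff, w.top_iff]
      have l2 : (vv (e y) ≤ vv (e 0)) ↔ y = 0 := by
        rw [map_zero, map_zero]
        constructor
        · intro h
          exact (_root_.map_eq_zero e).mp (vv.zero_iff.mp (le_antisymm h zero_le'))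
        · rintro rfl
          rw [map_zero, map_zero]
      rw [l1, l2]
    · by_cases hy : y = 0
      · subst hy
        simp only [w.map_zero, le_top, map_zero, zero_le']
      · have hx' : w x ≠ ⊤ := w.ne_top_iff.mpr hx
        have hvx : vv (e x) ≠ 0 := fun h => hx ((_root_.map_eq_zero e).mp (vv.zero_iff.mp h))
        have key1 : w x ≤ w y ↔ 0 ≤ w (y / x) := by
          have hxy : w (y / x) + w x = w y := by
            rw [← w.map_mul, div_mul_cancel₀ y hx]
          constructor
          · intro hle
            by_contra hcon
            have h2 : w (y / x) < 0 := not_le.mp hcon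
            have h3 := WithTop.add_lt_add_right hx' h2
            rw [hxy, zero_add] at h3
            exact absurd hle (not_le.mpr h3)
          · intro h0
            calc w x = 0 + w x := (zero_add _).symm
            _ ≤ w (y / x) + w x := add_le_add_left h0 _
            _ = w y := hxy
        have key2 : vv (e y) ≤ vv (e x) ↔ vv (e (y / x)) ≤ 1 := by
          rw [map_div₀ e, map_div₀ vv, div_le_one₀ (zero_lt_iff.mpr hvx)]
        rw [key1, hS, key2]
  have hTlt : ∀ x y : L, w x < w y ↔ vv (e y) < vv (e x) := by
    intro x y
    rw [lt_iff_not_ge, lt_iff_not_ge, hT y x]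
  have hTeq : ∀ x y : L, w x = w y ↔ vv (e x) = vv (e y) := by
    intro x y
    rw [le_antisymm_iff, le_antisymm_iff, hT x y, hT y x, and_comm]
  -- the sequence is pseudo-convergent in M
  have hpc' : ∀ ρ σ τ : ι, ρ < σ → σ < τ →
      vv (e (a τ) - e (a σ)) < vv (e (a σ) - e (a ρ)) := by
    intro ρ σ τ h1 h2
    rw [← map_sub e, ← map_sub e]
    exact (hTlt _ _).mp (hpc ρ σ τ h1 h2)
  obtain ⟨ρf, h⟩ := pcv_main_mult (v := vv) (b := fun ρ => e (a ρ)) hpc' (f.map e)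
  have heval : ∀ x : L, (f.map e).eval (e x) = e (f.eval x) := by
    intro x
    rw [Polynomial.eval_map, Polynomial.eval₂_at_apply]
  refine ⟨ρf, ?_⟩
  rcases h with h | h
  · refine Or.inl fun σ hσ => ?_
    have h2 := h σ hσ
    rw [heval, heval] at h2
    exact (hTeq _ _).mpr h2
  · refine Or.inr fun ρ σ hρ hσ => ?_
    have h2 := h ρ σ hρ hσ
    rw [heval, heval] at h2
    exact (hTlt _ _).mpr h2
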